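/- Let T > 0, let φ : [0,T] → ℝ be absolutely continuous with almost-everywhere derivative φ′ ∈ L¹(0,T) satisfying φ(b) − φ(a) = ∫_a^b φ′(s) ds for all 0 ≤ a ≤ b ≤ T, and let f ∈ L¹(0,T). Then for every h > 0 and every t ≥ 0 with t + h ≤ T, (1/h)∫_t^{t+h} φ(s) f(s) ds = φ(t+h) · f_h(t) + D_h φ(t) · ∫_0^t f(s) ds − (1/h)∫_t^{t+h} φ′(s) (∫_0^s f(r) dr) ds. -/
import Mathlib


open MeasureTheory intervalIntegral

/-- The basic Steklov-averaging integration-by-parts identity (Lemma 4.1 of the paper):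
for an absolutely continuous `φ` (with a.e. derivative `φ'` satisfying the fundamental
theorem of calculus on `[0,T]`) and `f ∈ L¹(0,T)`, for every `h > 0` and `t ≥ 0` with
`t + h ≤ T`,
`(1/h) ∫_t^{t+h} φ f = φ(t+h) f_h(t) + D_h φ(t) ∫_0^t f - (1/h) ∫_t^{t+h} φ'(s) ∫_0^s f`. -/
theorem steklov_ibp_identity (T : ℝ) (hT : 0 < T) (φ φ' f : ℝ → ℝ)
    (hφ'int : IntegrableOn φ' (Set.Ioc 0 T))
    (hFTC : ∀ a b : ℝ, 0 ≤ a → a ≤ b → b ≤ T → φ b - φ a = ∫ s in a..b, φ' s)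
    (hfint : IntegrableOn f (Set.Ioc 0 T))
    (h t : ℝ) (hh : 0 < h) (ht : 0 ≤ t) (hth : t + h ≤ T) :
    (1 / h) * ∫ s in t..(t + h), φ s * f s
      = φ (t + h) * ((1 / h) * ∫ s in t..(t + h), f s)
        + ((φ (t + h) - φ t) / h) * (∫ s in (0 : ℝ)..t, f s)
        - (1 / h) * ∫ s in t..(t + h), φ' s * (∫ r in (0 : ℝ)..s, f r) := by
  set b := t + h with hbdef
  have htb : t ≤ b := by simp [hbdef]; linarith
  have hbT : b ≤ T := hth
  have htT : t ≤ T := le_trans (by linarith) hth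
  have hsub : Set.Ioc t b ⊆ Set.Ioc 0 T := Set.Ioc_subset_Ioc ht hbT
  have hfI : IntegrableOn f (Set.Ioc t b) := hfint.mono_set hsub
  have hφ'I : IntegrableOn φ' (Set.Ioc t b) := hφ'int.mono_set hsub
  -- interval integrability on subintervals of [0,T]
  have hfII : ∀ a' b' : ℝ, 0 ≤ a' → a' ≤ b' → b' ≤ T → IntervalIntegrable f volume a' b' :=
    fun a' b' h0 h1 h2 => (intervalIntegrable_iff_integrableOn_Ioc_of_le h1).2
      (hfint.mono_set (Set.Ioc_subset_Ioc h0 h2))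
  have hφ'II : ∀ a' b' : ℝ, 0 ≤ a' → a' ≤ b' → b' ≤ T → IntervalIntegrable φ' volume a' b' :=
    fun a' b' h0 h1 h2 => (intervalIntegrable_iff_integrableOn_Ioc_of_le h1).2
      (hφ'int.mono_set (Set.Ioc_subset_Ioc h0 h2))
  set F : ℝ → ℝ := fun r => ∫ r' in (0 : ℝ)..r, f r' with hFdef
  set G : ℝ → ℝ := fun s => ∫ r in s..b, φ' r with hGdef
  -- continuity of G on [t,b]
  have hGcont : ContinuousOn G (Set.Icc t b) := by
    have h1 : ContinuousOn (fun x => ∫ r in t..x, φ' r) (Set.Icc t b) := by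
      have := intervalIntegral.continuousOn_primitive_interval
        (a := t) (b := b) (μ := volume) (f := φ')
        (by rw [Set.uIcc_of_le htb]
            exact (integrableOn_Icc_iff_integrableOn_Ioc).2 hφ'I)
      rwa [Set.uIcc_of_le htb] at this
    have h2 : ∀ x ∈ Set.Icc t b, G x = (∫ r in t..b, φ' r) - ∫ r in t..x, φ' r := by
      intro x hx
      rw [intervalIntegral.integral_interval_sub_left
        (hφ'II t b ht htb hbT) (hφ'II t x ht hx.1 (le_trans hx.2 hbT))]
    refine ContinuousOn.congr ?_ h2
    exact continuousOn_const.sub h1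
  -- continuity of F on [t,b]
  have hFcont : ContinuousOn F (Set.Icc t b) := by
    have h1 : ContinuousOn (fun x => ∫ r in t..x, f r) (Set.Icc t b) := by
      have := intervalIntegral.continuousOn_primitive_interval
        (a := t) (b := b) (μ := volume) (f := f)
        (by rw [Set.uIcc_of_le htb]
            exact (integrableOn_Icc_iff_integrableOn_Ioc).2 hfI)
      rwa [Set.uIcc_of_le htb] at this
    have h2 : ∀ x ∈ Set.Icc t b, F x = (∫ r in (0:ℝ)..t, f r) + ∫ r in t..x, f r := by
      intro x hx
      show (∫ r' in (0:ℝ)..x, f r') = (∫ r in (0:ℝ)..t, f r) + ∫ r in t..x, f r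
      rw [← intervalIntegral.integral_add_adjacent_intervals
        (hfII 0 t le_rfl ht htT) (hfII t x ht hx.1 (le_trans hx.2 hbT))]
    refine ContinuousOn.congr ?_ h2
    exact continuousOn_const.add h1
  -- bounds
  obtain ⟨CG, hCG⟩ := isCompact_Icc.exists_bound_of_continuousOn hGcont
  obtain ⟨CF, hCF⟩ := isCompact_Icc.exists_bound_of_continuousOn hFcont
  -- integrability of G*f on Ioc t b
  have hGf : IntegrableOn (fun s => G s * f s) (Set.Ioc t b) := by
    refine Integrable.mono' (hfI.norm.const_mul CG) ?_ ?_
    · exact ((hGcont.mono Set.Ioc_subset_Icc_self).aestronglyMeasurable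
        measurableSet_Ioc).mul hfI.1
    · filter_upwards [ae_restrict_mem measurableSet_Ioc] with s hs
      rw [norm_mul]
      exact mul_le_mul_of_nonneg_right (hCG s (Set.Ioc_subset_Icc_self hs)) (norm_nonneg _)
  -- integrability of φ'*F on Ioc t b
  have hφ'F : IntegrableOn (fun r => φ' r * F r) (Set.Ioc t b) := by
    refine Integrable.mono' (hφ'I.norm.mul_const CF) ?_ ?_
    · exact hφ'I.1.mul ((hFcont.mono Set.Ioc_subset_Icc_self).aestronglyMeasurable
        measurableSet_Ioc)
    · filter_upwards [ae_restrict_mem measurableSet_Ioc] with r hr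
      rw [norm_mul]
      exact mul_le_mul_of_nonneg_left (hCF r (Set.Ioc_subset_Icc_self hr)) (norm_nonneg _)
  -- Fubini: ∫_{Ioc t b} f s * G s ds = ∫_{Ioc t b} φ' r * (∫ t..r f) dr
  have hFub : (∫ s in Set.Ioc t b, f s * G s)
      = ∫ r in Set.Ioc t b, φ' r * ∫ s in t..r, f s := by
    set g : ℝ → ℝ → ℝ := fun s r => if s < r then f s * φ' r else 0 with hgdef
    have hmeas : MeasurableSet {p : ℝ × ℝ | p.1 < p.2} :=
      measurableSet_lt measurable_fst measurable_snd
    have hint : Integrable (Function.uncurry g)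
        ((volume.restrict (Set.Ioc t b)).prod (volume.restrict (Set.Ioc t b))) := by
      have : Function.uncurry g
          = Set.indicator {p : ℝ × ℝ | p.1 < p.2} (fun p => f p.1 * φ' p.2) := by
        funext p
        simp [hgdef, Function.uncurry, Set.indicator_apply]
      rw [this]
      exact (hfI.mul_prod hφ'I).indicator hmeas
    have hswap := MeasureTheory.integral_integral_swap hint
    have hA : ∀ s ∈ Set.Ioc t b, (∫ r in Set.Ioc t b, g s r) = f s * G s := by
      intro s hs
      have h1 : (fun r => g s r) = Set.indicator (Set.Ioi s) (fun r => f s * φ' r) := by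
        funext r
        simp [hgdef, Set.indicator_apply, Set.mem_Ioi]
      rw [h1, MeasureTheory.setIntegral_indicator measurableSet_Ioi]
      have h2 : Set.Ioc t b ∩ Set.Ioi s = Set.Ioc s b := by
        rw [Set.Ioc_inter_Ioi, sup_eq_right.2 (le_of_lt hs.1)]
      rw [h2, MeasureTheory.integral_const_mul]
      congr 1
      exact (intervalIntegral.integral_of_le hs.2).symm
    have hB : ∀ r ∈ Set.Ioc t b, (∫ s in Set.Ioc t b, g s r) = φ' r * ∫ s in t..r, f s := by
      intro r hr
      have h1 : (fun s => g s r) = Set.indicator (Set.Iio r) (fun s => f s * φ' r) := by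
        funext s
        simp [hgdef, Set.indicator_apply, Set.mem_Iio]
      rw [h1, MeasureTheory.setIntegral_indicator measurableSet_Iio]
      have h2 : Set.Ioc t b ∩ Set.Iio r = Set.Ioo t r := by
        ext x
        simp only [Set.mem_inter_iff, Set.mem_Ioc, Set.mem_Iio, Set.mem_Ioo]
        constructor
        · rintro ⟨⟨h1', h2'⟩, h3'⟩; exact ⟨h1', h3'⟩
        · rintro ⟨h1', h2'⟩; exact ⟨⟨h1', le_trans (le_of_lt h2') hr.2⟩, h2'⟩
      rw [h2, MeasureTheory.integral_mul_const,
        ← MeasureTheory.integral_Ioc_eq_integral_Ioo,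
        ← intervalIntegral.integral_of_le (le_of_lt hr.1)]
      ring
    calc (∫ s in Set.Ioc t b, f s * G s)
        = ∫ s in Set.Ioc t b, ∫ r in Set.Ioc t b, g s r := by
          refine (MeasureTheory.setIntegral_congr_fun measurableSet_Ioc ?_).symm
          intro s hs; exact hA s hs
      _ = ∫ r in Set.Ioc t b, ∫ s in Set.Ioc t b, g s r := hswap
      _ = ∫ r in Set.Ioc t b, φ' r * ∫ s in t..r, f s := by
          refine MeasureTheory.setIntegral_congr_fun measurableSet_Ioc ?_
          intro r hr; exact hB r hr
  -- main identity
  have key : (∫ s in t..b, φ s * f s)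
      = φ b * (∫ s in t..b, f s) + (φ b - φ t) * (∫ s in (0:ℝ)..t, f s)
        - ∫ s in t..b, φ' s * F s := by
    have e1 : (∫ s in t..b, φ s * f s) = ∫ s in Set.Ioc t b, (φ b - G s) * f s := by
      rw [intervalIntegral.integral_of_le htb]
      refine MeasureTheory.setIntegral_congr_fun measurableSet_Ioc ?_
      intro s hs
      have h0s : (0:ℝ) ≤ s := le_trans ht (le_of_lt hs.1)
      have : φ b - φ s = G s := hFTC s b h0s hs.2 hbT
      have hφs : φ s = φ b - G s := by linarith
      show φ s * f s = (φ b - G s) * f s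
      rw [hφs]
    have e2 : (∫ s in Set.Ioc t b, (φ b - G s) * f s)
        = φ b * (∫ s in Set.Ioc t b, f s) - ∫ s in Set.Ioc t b, G s * f s := by
      have : (fun s => (φ b - G s) * f s) = fun s => φ b * f s - G s * f s := by
        funext s; ring
      rw [this, MeasureTheory.integral_sub (hfI.const_mul (φ b)) hGf,
        MeasureTheory.integral_const_mul]
    have e3 : (∫ s in Set.Ioc t b, G s * f s)
        = (∫ s in Set.Ioc t b, φ' s * F s) - (φ b - φ t) * (∫ s in (0:ℝ)..t, f s) := by
      have e3a : (∫ s in Set.Ioc t b, G s * f s) = ∫ s in Set.Ioc t b, f s * G s := by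
        congr 1; funext s; ring
      rw [e3a, hFub]
      have e3b : (∫ r in Set.Ioc t b, φ' r * ∫ s in t..r, f s)
          = ∫ r in Set.Ioc t b, (φ' r * F r - φ' r * (∫ s in (0:ℝ)..t, f s)) := by
        refine MeasureTheory.setIntegral_congr_fun measurableSet_Ioc ?_
        intro r hr
        have h0r : (0:ℝ) ≤ r := le_trans ht (le_of_lt hr.1)
        have hrT : r ≤ T := le_trans hr.2 hbT
        have : (∫ s in (0:ℝ)..r, f s) - (∫ s in (0:ℝ)..t, f s) = ∫ s in t..r, f s :=
          intervalIntegral.integral_interval_sub_left (hfII 0 r le_rfl h0r hrT)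
            (hfII 0 t le_rfl ht htT)
        show φ' r * (∫ s in t..r, f s)
            = φ' r * (∫ s in (0:ℝ)..r, f s) - φ' r * (∫ s in (0:ℝ)..t, f s)
        rw [← this]
        ring
      rw [e3b, MeasureTheory.integral_sub hφ'F (hφ'I.mul_const _),
        MeasureTheory.integral_mul_const]
      have : (∫ r in Set.Ioc t b, φ' r) = φ b - φ t := by
        rw [← intervalIntegral.integral_of_le htb]
        exact (hFTC t b ht htb hbT).symm
      rw [this]
    rw [e1, e2, e3, ← intervalIntegral.integral_of_le htb,
      ← intervalIntegral.integral_of_le (f := fun s => φ' s * F s) htb]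
    ring
  have hFeq : (∫ s in t..b, φ' s * (∫ r in (0:ℝ)..s, f r)) = ∫ s in t..b, φ' s * F s := rfl
  rw [hFeq, key]
  ring
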